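/- For any n×n complex matrix X, the 2n×2n block matrix [[|X*|, X],[X*, |X|]] is positive semidefinite. -/

import Mathlib

open scoped Matrix ComplexOrder

noncomputable section

/-- The numerical range of a matrix. -/
def numRange {m : Type*} [Fintype m] (X : Matrix m m ℂ) : Set ℂ :=
  {z | ∃ v : m → ℂ, star v ⬝ᵥ v = 1 ∧ z = star v ⬝ᵥ X.mulVec v}

/-- The inradius of a subset of the plane: the radius of the largest disc it contains. -/
def inRad (S : Set ℂ) : ℝ := sSup {r : ℝ | ∃ c : ℂ, Metric.closedBall c r ⊆ S}

/-- The indiameter: the diameter of the largest disc contained in the set. -/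
def inDiam (S : Set ℂ) : ℝ := 2 * inRad S

/-- The numerical range of the compression of `X` to the subspace `S`. -/
def nrOn {m : Type*} [Fintype m] (X : Matrix m m ℂ) (S : Submodule ℂ (m → ℂ)) : Set ℂ :=
  {z | ∃ v ∈ S, star v ⬝ᵥ v = 1 ∧ z = star v ⬝ᵥ X.mulVec v}

/-- The elliptical width `δ₂(X)`: the supremum of the indiameters of the numerical
ranges of compressions of `X` to two-dimensional subspaces. -/
def ellWidth {m : Type*} [Fintype m] (X : Matrix m m ℂ) : ℝ :=
  sSup {d | ∃ S : Submodule ℂ (m → ℂ), Module.finrank ℂ S = 2 ∧ d = inDiam (nrOn X S)}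

/-- The operator (spectral) norm of a matrix. -/
def opNorm {m : Type*} [Fintype m] [DecidableEq m] (M : Matrix m m ℂ) : ℝ :=
  ‖Matrix.toEuclideanCLM (𝕜 := ℂ) M‖

/-- The Frobenius (Hilbert–Schmidt) norm of a matrix. -/
def frobNorm {m : Type*} [Fintype m] (M : Matrix m m ℂ) : ℝ :=
  Real.sqrt ((Matrix.trace (Mᴴ * M)).re)

/-- Eigenvalues of a Hermitian matrix in decreasing order (junk value `0` otherwise):
`eigDesc M k` is the `(k+1)`-th largest eigenvalue of `M`. -/
def eigDesc {m : ℕ} (M : Matrix (Fin m) (Fin m) ℂ) (k : Fin m) : ℝ :=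
  if h : M.IsHermitian then (h.eigenvalues ∘ Tuple.sort h.eigenvalues) k.rev else 0

/-- The absolute value `|X| = (XᴴX)^(1/2)` of a matrix. -/
def matAbs {m : Type*} [Fintype m] [DecidableEq m] (X : Matrix m m ℂ) : Matrix m m ℂ :=
  ((Matrix.posSemidef_conjTranspose_mul_self X).1.eigenvectorUnitary : Matrix m m ℂ) *
    Matrix.diagonal (((↑) : ℝ → ℂ) ∘ (Real.sqrt ·) ∘ (Matrix.posSemidef_conjTranspose_mul_self X).1.eigenvalues) *
    (star (Matrix.posSemidef_conjTranspose_mul_self X).1.eigenvectorUnitary : Matrix m m ℂ)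

/-- The `2n × 2n` block matrix `[[A, X],[Xᴴ, B]]`, reindexed by `Fin (n+n)`. -/
def blockR {n : ℕ} (A X B : Matrix (Fin n) (Fin n) ℂ) :
    Matrix (Fin (n + n)) (Fin (n + n)) ℂ :=
  (Matrix.fromBlocks A X Xᴴ B).submatrix finSumFinEquiv.symm finSumFinEquiv.symm

/-- The operator norm distance from `X` to the scalar matrices. -/
def distScalar {m : Type*} [Fintype m] [DecidableEq m] (X : Matrix m m ℂ) : ℝ :=
  ⨅ a : ℂ, opNorm (X - a • 1)

/-- Apply a real function to a Hermitian matrix by the functional calculus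
(junk value `0` if the matrix is not Hermitian). -/
def hermApply {m : Type*} [Fintype m] [DecidableEq m] (f : ℝ → ℝ) (M : Matrix m m ℂ) :
    Matrix m m ℂ :=
  if h : M.IsHermitian then h.cfc f else 0

end
section
open Matrix
open scoped MatrixOrder

lemma matAbs_eq_sqrt {m : Type*} [Fintype m] [DecidableEq m] (X : Matrix m m ℂ) :
    matAbs X = CFC.sqrt (Xᴴ * X) := by
  rw [CFC.sqrt_eq_cfc, cfc_nnreal_eq_real _ (Xᴴ * X) (posSemidef_conjTranspose_mul_self X).nonneg,
    (posSemidef_conjTranspose_mul_self X).1.cfc_eq]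
  simp only [IsHermitian.cfc, Unitary.conjStarAlgAut_apply, matAbs]
  congr 3
  funext i
  simp [Real.coe_toNNReal', (posSemidef_conjTranspose_mul_self X).eigenvalues_nonneg i]

lemma matAbs_psd {m : Type*} [Fintype m] [DecidableEq m] (X : Matrix m m ℂ) :
    (matAbs X).PosSemidef := by
  rw [matAbs_eq_sqrt]; exact (CFC.sqrt_nonneg _).posSemidef

lemma matAbs_mul_self {m : Type*} [Fintype m] [DecidableEq m] (X : Matrix m m ℂ) :
    matAbs X * matAbs X = Xᴴ * X := by
  rw [matAbs_eq_sqrt]; exact CFC.sqrt_mul_sqrt_self _ (posSemidef_conjTranspose_mul_self X).nonneg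

private lemma aux_sqrt_add_self {m : Type*} [Fintype m] [DecidableEq m] {H M : Matrix m m ℂ}
    (hH : H.IsHermitian) (hM : M.PosSemidef) (h2 : H ^ 2 = M) :
    (CFC.sqrt M + H).PosSemidef := by
  set U : Matrix m m ℂ := (hH.eigenvectorUnitary : Matrix m m ℂ) with hU
  set d : m → ℝ := hH.eigenvalues with hd
  have h1 : star U * U = 1 := (Matrix.mem_unitaryGroup_iff').mp hH.eigenvectorUnitary.2
  have hspec : H = U * diagonal (Complex.ofReal ∘ id ∘ d) * star U := hH.spectral_theorem
  have key : ∀ f : ℝ → ℝ,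
      (U * diagonal (Complex.ofReal ∘ f ∘ d) * star U) *
        (U * diagonal (Complex.ofReal ∘ f ∘ d) * star U)
        = U * diagonal (Complex.ofReal ∘ (fun t => f t * f t) ∘ d) * star U := by
    intro f
    calc (U * diagonal (Complex.ofReal ∘ f ∘ d) * star U) *
          (U * diagonal (Complex.ofReal ∘ f ∘ d) * star U)
        = U * (diagonal (Complex.ofReal ∘ f ∘ d) * (star U * U) *
            diagonal (Complex.ofReal ∘ f ∘ d)) * star U := by
          simp only [Matrix.mul_assoc]
      _ = U * diagonal (Complex.ofReal ∘ (fun t => f t * f t) ∘ d) * star U := by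
          rw [h1, mul_one, diagonal_mul_diagonal]
          have he : (fun i => (Complex.ofReal ∘ f ∘ d) i * (Complex.ofReal ∘ f ∘ d) i)
              = Complex.ofReal ∘ (fun t => f t * f t) ∘ d := by
            funext i; simp
          rw [he]
  set A : Matrix m m ℂ := U * diagonal (Complex.ofReal ∘ (fun t => |t|) ∘ d) * star U with hA
  have hApsd : A.PosSemidef := by
    apply PosSemidef.mul_mul_conjTranspose_same
    refine posSemidef_diagonal_iff.mpr fun i => ?_
    simp only [Function.comp_apply]
    exact_mod_cast Complex.zero_le_real.mpr (abs_nonneg _)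
  have hAsq : A ^ 2 = M := by
    rw [← h2, pow_two, pow_two, hA, key]
    conv_rhs => rw [hspec, key]
    have he : Complex.ofReal ∘ (fun t => |t| * |t|) ∘ d
        = Complex.ofReal ∘ (fun t => id t * id t) ∘ d := by
      funext i; simp [abs_mul_abs_self]
    rw [he]
  have hAeq : A = CFC.sqrt M := (CFC.sqrt_unique (by rw [← pow_two]; exact hAsq) hApsd.nonneg).symm
  rw [← hAeq]
  have heq : A + H = U * diagonal (Complex.ofReal ∘ (fun t => |t| + t) ∘ d) * star U := by
    conv_lhs => rw [hA, hspec]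
    rw [← add_mul, ← mul_add, diagonal_add]
    have he : (fun i => (Complex.ofReal ∘ (fun t => |t|) ∘ d) i + (Complex.ofReal ∘ id ∘ d) i)
        = Complex.ofReal ∘ (fun t => |t| + t) ∘ d := by
      funext i; simp
    rw [he]
  rw [heq]
  apply PosSemidef.mul_mul_conjTranspose_same
  refine posSemidef_diagonal_iff.mpr fun i => ?_
  simp only [Function.comp_apply]
  have h0 : (0:ℝ) ≤ |d i| + d i := by
    have := neg_le_abs (d i); linarith
  exact_mod_cast Complex.zero_le_real.mpr h0


end

section
open Matrix
open scoped MatrixOrder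

set_option maxHeartbeats 1000000 in
/-- For any `X ∈ M_n(ℂ)`, the block matrix `[[|Xᴴ|, X],[Xᴴ, |X|]]`
is positive semidefinite. -/
theorem stmt13 {n : ℕ} (X : Matrix (Fin n) (Fin n) ℂ) :
    (Matrix.fromBlocks (matAbs Xᴴ) X Xᴴ (matAbs X)).PosSemidef := by
  classical
  set H : Matrix (Fin n ⊕ Fin n) (Fin n ⊕ Fin n) ℂ := Matrix.fromBlocks 0 X Xᴴ 0 with hHdef
  have hH : H.IsHermitian :=
    Matrix.IsHermitian.fromBlocks isHermitian_zero rfl isHermitian_zero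
  set M : Matrix (Fin n ⊕ Fin n) (Fin n ⊕ Fin n) ℂ :=
    Matrix.fromBlocks (X * Xᴴ) 0 0 (Xᴴ * X) with hMdef
  have hM : M.PosSemidef := by
    have h := posSemidef_conjTranspose_mul_self (Matrix.fromBlocks Xᴴ 0 0 X)
    simpa [fromBlocks_conjTranspose, fromBlocks_multiply] using h
  have h2 : H ^ 2 = M := by
    rw [pow_two]
    simp [hHdef, hMdef, fromBlocks_multiply]
  set B : Matrix (Fin n ⊕ Fin n) (Fin n ⊕ Fin n) ℂ :=
    Matrix.fromBlocks (matAbs Xᴴ) 0 0 (matAbs X) with hBdef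
  have hP : (matAbs Xᴴ).PosSemidef := matAbs_psd Xᴴ
  have hQ : (matAbs X).PosSemidef := matAbs_psd X
  have hB : B.PosSemidef := by
    have h := posSemidef_conjTranspose_mul_self (Matrix.fromBlocks (CFC.sqrt (matAbs Xᴴ)) 0 0 (CFC.sqrt (matAbs X)))
    simpa only [fromBlocks_conjTranspose, fromBlocks_multiply, (CFC.sqrt_nonneg (matAbs Xᴴ)).posSemidef.1.eq,
      (CFC.sqrt_nonneg (matAbs X)).posSemidef.1.eq, CFC.sqrt_mul_sqrt_self _ hP.nonneg,
      CFC.sqrt_mul_sqrt_self _ hQ.nonneg, hBdef,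
      conjTranspose_zero, Matrix.mul_zero, Matrix.zero_mul, add_zero, zero_add] using h
  have hB2 : B ^ 2 = M := by
    rw [pow_two]
    simp [hBdef, hMdef, fromBlocks_multiply, matAbs_mul_self]
  have hBeq : B = CFC.sqrt M := (CFC.sqrt_unique (by rw [← pow_two]; exact hB2) hB.nonneg).symm
  have hgoal : Matrix.fromBlocks (matAbs Xᴴ) X Xᴴ (matAbs X) = B + H := by
    rw [hBdef, hHdef, Matrix.fromBlocks_add, add_zero, zero_add, zero_add, add_zero]
  rw [hgoal, hBeq]
  exact aux_sqrt_add_self hH hM h2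

end
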